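/- Let G be a finite directed acyclic graph and S a nonempty set of vertices that is path-complete (for any directed path whose two endpoints lie in S, all vertices of the path lie in S) and parent-complete (for any vertex v in S of in-degree 2, if one in-neighbor of v is in S then so is the other). Then every vertex of S that has an in-neighbor outside S is minimal in S with respect to the reachability partial order (no other element of S reaches it). -/
import Mathlib


theorem stmt_0 {V : Type*} [Fintype V] (E : V → V → Prop)
    (hacyc : ∀ u v : V, Relation.ReflTransGen E u v → Relation.ReflTransGen E v u → u = v)
    (hdeg : ∀ v : V, Set.ncard {u : V | E u v} ≤ 2)
    (S : Set V) (hS : S.Nonempty)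
    (hpath : ∀ u v w : V, u ∈ S → v ∈ S →
      Relation.ReflTransGen E u w → Relation.ReflTransGen E w v → w ∈ S)
    (hparent : ∀ v ∈ S, ∀ u₁ u₂ : V, E u₁ v → E u₂ v → u₁ ∈ S → u₂ ∈ S)
    (v : V) (hv : v ∈ S) (u : V) (hu : E u v) (huS : u ∉ S) :
    ∀ w ∈ S, w ≠ v → ¬ Relation.ReflTransGen E w v := by
  intro w hw hne hwv
  rcases Relation.ReflTransGen.cases_tail hwv with h | ⟨x, hwx, hxv⟩
  · exact hne h.symm
  · have hxS : x ∈ S := hpath w v x hw hv hwx (Relation.ReflTransGen.single hxv)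
    exact huS (hparent v hv x u hxv hu hxS)
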